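/- The vertex set of every d-regular graph G with d ≥ 14 and d ∉ {15, 17} can be partitioned into sets V₀ and V₁ such that, writing r ∈ {0,1} for the residue of d mod 2: every vertex v ∈ V₀ has at least 2 + r neighbours in V₀ and at least 2 neighbours in V₁, and every vertex v ∈ V₁ has at least 2 + r neighbours in V₁ and at least 2 neighbours in V₀. -/

import Mathlib

namespace LLLcnt

open Finset

variable {V : Type*} [Fintype V]

open Classical in
noncomputable def cnt (P : (V → Bool) → Prop) : ℕ :=
  (Finset.univ.filter P).card

/-- `P` is determined by the coordinates in `W`. -/
def DetOn (W : Finset V) (P : (V → Bool) → Prop) : Prop :=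
  ∀ f g : V → Bool, (∀ x ∈ W, f x = g x) → P f → P g

lemma cnt_congr {P Q : (V → Bool) → Prop} (h : ∀ f, P f ↔ Q f) : cnt P = cnt Q := by
  classical
  unfold cnt
  congr 1
  ext f
  simp [Finset.mem_filter, h]

lemma cnt_mono {P Q : (V → Bool) → Prop} (h : ∀ f, P f → Q f) : cnt P ≤ cnt Q := by
  classical
  apply Finset.card_le_card
  intro f hf
  simp only [Finset.mem_filter] at *
  exact ⟨hf.1, h f hf.2⟩

lemma cnt_or_le (P Q : (V → Bool) → Prop) :
    cnt (fun f => P f ∨ Q f) ≤ cnt P + cnt Q := by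
  classical
  refine le_trans (Finset.card_le_card ?_) (Finset.card_union_le _ _)
  intro f hf
  simp only [Finset.mem_filter, Finset.mem_union] at *
  tauto

lemma cnt_split (P Q : (V → Bool) → Prop) :
    cnt P = cnt (fun f => P f ∧ Q f) + cnt (fun f => P f ∧ ¬ Q f) := by
  classical
  unfold cnt
  rw [← Finset.card_union_of_disjoint]
  · congr 1
    ext f
    simp only [Finset.mem_filter, Finset.mem_union, Finset.mem_univ, true_and]
    tauto
  · rw [Finset.disjoint_left]
    intro f hf hf'
    simp only [Finset.mem_filter] at *
    tauto

lemma cnt_eq [Fintype (V → Bool)] {P : (V → Bool) → Prop} [DecidablePred P] :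
    cnt P = (Finset.univ.filter P).card := by
  unfold cnt
  congr 1
  ext f
  simp [Finset.mem_filter]

lemma cnt_true_eq : cnt (fun _ : V → Bool => True) = 2 ^ Fintype.card V := by
  classical
  unfold cnt
  rw [Finset.filter_true, Finset.card_univ, Fintype.card_fun, Fintype.card_bool]

lemma cnt_le_total (P : (V → Bool) → Prop) : cnt P ≤ 2 ^ Fintype.card V := by
  rw [← cnt_true_eq]
  exact cnt_mono (fun _ _ => trivial)

/-- Events determined by disjoint coordinate sets are independent (counting form). -/
lemma cnt_indep {W1 W2 : Finset V} {P Q : (V → Bool) → Prop}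
    (hP : DetOn W1 P) (hQ : DetOn W2 Q) (hdisj : Disjoint W1 W2) :
    cnt (fun f => P f ∧ Q f) * 2 ^ Fintype.card V = cnt P * cnt Q := by
  classical
  have hmerge : ∀ f g : V → Bool, True := fun _ _ => trivial
  set merge : (V → Bool) → (V → Bool) → (V → Bool) :=
    fun f g x => if x ∈ W1 then f x else g x with hm
  have agree1 : ∀ f g : V → Bool, ∀ x ∈ W1, f x = merge f g x := by
    intro f g x hx; simp [hm, hx]
  have agree2 : ∀ f g : V → Bool, ∀ x ∈ W2, g x = merge f g x := by
    intro f g x hx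
    have : x ∉ W1 := Finset.disjoint_right.mp hdisj hx
    simp [hm, this]
  have key : ((Finset.univ ×ˢ Finset.univ).filter
      (fun p : (V → Bool) × (V → Bool) => P p.1 ∧ Q p.1)).card
      = ((Finset.univ ×ˢ Finset.univ).filter
      (fun p : (V → Bool) × (V → Bool) => P p.1 ∧ Q p.2)).card := by
    apply Finset.card_bij' (i := fun p _ => (merge p.1 p.2, merge p.2 p.1))
      (j := fun p _ => (merge p.1 p.2, merge p.2 p.1))
    · rintro ⟨f, g⟩ hp
      simp only [Finset.mem_filter] at hp ⊢
      refine ⟨by simp, hP f _ (agree1 f g) hp.2.1, hQ f _ ?_ hp.2.2⟩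
      intro x hx
      have hx1 : x ∉ W1 := Finset.disjoint_right.mp hdisj hx
      simp [hm, hx1]
    · rintro ⟨f, g⟩ hp
      simp only [Finset.mem_filter] at hp ⊢
      exact ⟨by simp, hP f _ (agree1 f g) hp.2.1, hQ g _ (agree2 f g) hp.2.2⟩
    · rintro ⟨f, g⟩ _
      simp only [Prod.mk.injEq]
      constructor <;> (funext x; by_cases hx : x ∈ W1 <;> simp [hm, hx])
    · rintro ⟨f, g⟩ _
      simp only [Prod.mk.injEq]
      constructor <;> (funext x; by_cases hx : x ∈ W1 <;> simp [hm, hx])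
  have lhs : ((Finset.univ ×ˢ Finset.univ).filter
      (fun p : (V → Bool) × (V → Bool) => P p.1 ∧ Q p.1)).card
      = cnt (fun f => P f ∧ Q f) * 2 ^ Fintype.card V := by
    have : ((Finset.univ ×ˢ Finset.univ).filter
        (fun p : (V → Bool) × (V → Bool) => P p.1 ∧ Q p.1))
        = (Finset.univ.filter (fun f => P f ∧ Q f)) ×ˢ Finset.univ := by
      ext ⟨f, g⟩
      simp [Finset.mem_filter, Finset.mem_product]
    rw [this, Finset.card_product, Finset.card_univ, Fintype.card_fun, Fintype.card_bool]
    congr 1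
    exact cnt_eq.symm
  have rhs : ((Finset.univ ×ˢ Finset.univ).filter
      (fun p : (V → Bool) × (V → Bool) => P p.1 ∧ Q p.2)).card
      = cnt P * cnt Q := by
    have : ((Finset.univ ×ˢ Finset.univ).filter
        (fun p : (V → Bool) × (V → Bool) => P p.1 ∧ Q p.2))
        = (Finset.univ.filter P) ×ˢ (Finset.univ.filter Q) := by
      ext ⟨f, g⟩
      simp [Finset.mem_filter, Finset.mem_product]
    rw [this, Finset.card_product]
    congr 1 <;> exact cnt_eq.symm
  rw [← lhs, key, rhs]

/-- The number of `f : V → Bool` with exactly `k` `true`s inside `N`. -/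
lemma cnt_count_true (N : Finset V) (k : ℕ) :
    cnt (fun f => (N.filter (fun u => f u = true)).card = k)
      = N.card.choose k * 2 ^ (Fintype.card V - N.card) := by
  classical
  unfold cnt
  rw [show N.card.choose k * 2 ^ (Fintype.card V - N.card)
      = ((N.powersetCard k) ×ˢ (Finset.univ \ N).powerset).card by
    rw [Finset.card_product, Finset.card_powersetCard, Finset.card_powerset,
      Finset.card_sdiff_of_subset (Finset.subset_univ N), Finset.card_univ]]
  apply Finset.card_bij' (i := fun f _ => (N.filter (fun u => f u = true),
      (Finset.univ \ N).filter (fun u => f u = true)))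
    (j := fun p _ => (fun u => decide (u ∈ p.1 ∪ p.2)))
  · intro f hf
    simp only [Finset.mem_filter, Finset.mem_univ, true_and] at hf
    simp only [Finset.mem_product, Finset.mem_powersetCard, Finset.mem_powerset]
    exact ⟨⟨Finset.filter_subset _ _, hf⟩, Finset.filter_subset _ _⟩
  · rintro ⟨s, t⟩ hp
    simp only [Finset.mem_product, Finset.mem_powersetCard, Finset.mem_powerset] at hp
    obtain ⟨⟨hsN, hsk⟩, ht⟩ := hp
    simp only [Finset.mem_filter, Finset.mem_univ, true_and]
    rw [show (N.filter (fun u => decide (u ∈ s ∪ t) = true)) = s by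
      ext u
      simp only [Finset.mem_filter, decide_eq_true_eq, Finset.mem_union]
      constructor
      · rintro ⟨huN, hu | hu⟩
        · exact hu
        · exact absurd huN (Finset.mem_sdiff.mp (ht hu)).2
      · intro hu; exact ⟨hsN hu, Or.inl hu⟩]
    exact hsk
  · intro f hf
    funext u
    by_cases huN : u ∈ N
    · cases hfu : f u <;>
        simp [Finset.mem_union, Finset.mem_filter, huN, hfu, Finset.mem_sdiff]
    · cases hfu : f u <;>
        simp [Finset.mem_union, Finset.mem_filter, huN, hfu, Finset.mem_sdiff]
  · rintro ⟨s, t⟩ hp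
    simp only [Finset.mem_product, Finset.mem_powersetCard, Finset.mem_powerset] at hp
    obtain ⟨⟨hsN, hsk⟩, ht⟩ := hp
    simp only [Prod.mk.injEq]
    constructor
    · ext u
      simp only [Finset.mem_filter, decide_eq_true_eq, Finset.mem_union]
      constructor
      · rintro ⟨huN, hu | hu⟩
        · exact hu
        · exact absurd huN (Finset.mem_sdiff.mp (ht hu)).2
      · intro hu; exact ⟨hsN hu, Or.inl hu⟩
    · ext u
      simp only [Finset.mem_filter, decide_eq_true_eq, Finset.mem_union, Finset.mem_sdiff]
      constructor
      · rintro ⟨⟨_, huN⟩, hu | hu⟩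
        · exact absurd (hsN hu) huN
        · exact hu
      · intro hu
        have := Finset.mem_sdiff.mp (ht hu)
        exact ⟨⟨Finset.mem_univ u, this.2⟩, Or.inr hu⟩

lemma cnt_comp_not (P : (V → Bool) → Prop) :
    cnt (fun f => P (fun x => ! f x)) = cnt P := by
  classical
  unfold cnt
  apply Finset.card_bij' (i := fun f _ => (fun x => ! f x))
    (j := fun f _ => (fun x => ! f x))
  · intro f hf
    simp only [Finset.mem_filter, Finset.mem_univ, true_and] at *
    exact hf
  · intro f hf
    simp only [Finset.mem_filter, Finset.mem_univ, true_and] at *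
    rw [show (fun x => !!(f x)) = f from funext fun x => Bool.not_not _]
    exact hf
  · intro f _; funext x; simp
  · intro f _; funext x; simp

lemma cnt_fv_true (v : V) :
    cnt (fun f : V → Bool => f v = true) = 2 ^ (Fintype.card V - 1) := by
  have h := cnt_count_true ({v} : Finset V) 1
  rw [Finset.card_singleton, Nat.choose_self, one_mul] at h
  rw [← h]
  apply cnt_congr
  intro f
  cases hfv : f v <;> simp [Finset.filter_singleton, hfv]

lemma cnt_fv_false (v : V) :
    cnt (fun f : V → Bool => f v = false) = 2 ^ (Fintype.card V - 1) := by
  have h := cnt_count_true ({v} : Finset V) 0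
  rw [Finset.card_singleton, Nat.choose_zero_right, one_mul] at h
  rw [← h]
  apply cnt_congr
  intro f
  cases hfv : f v <;> simp [Finset.filter_singleton, hfv]

end LLLcnt

namespace LLLcnt

open Finset

variable {V : Type*} [Fintype V] {I : Type*} [Fintype I]

open Classical in
/-- The dependency neighbourhood of `i`: events sharing a variable with `i`. -/
noncomputable def nbrs (vbl : I → Finset V) (i : I) : Finset I :=
  Finset.univ.filter (fun j => j ≠ i ∧ ¬ Disjoint (vbl i) (vbl j))

/-- `f` avoids all events indexed by `S`. -/
def avoid (A : I → (V → Bool) → Prop) (S : Finset I) (f : V → Bool) : Prop :=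
  ∀ j ∈ S, ¬ A j f

lemma detOn_avoid [DecidableEq V] {A : I → (V → Bool) → Prop} {vbl : I → Finset V}
    (hdet : ∀ i, DetOn (vbl i) (A i)) (S : Finset I) :
    DetOn (S.biUnion vbl) (avoid A S) := by
  intro f g hagree hf j hj hAg
  exact hf j hj (hdet j g f
    (fun x hx => (hagree x (Finset.mem_biUnion.mpr ⟨j, hj, hx⟩)).symm) hAg)

/-- Lovász Local Lemma, counting version, for events over independent
boolean variables. -/
theorem lll (A : I → (V → Bool) → Prop) (vbl : I → Finset V)
    (hdet : ∀ i, DetOn (vbl i) (A i)) (x : I → ℚ)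
    (hx0 : ∀ i, 0 < x i) (hx1 : ∀ i, x i < 1)
    (hcond : ∀ i, (cnt (A i) : ℚ) ≤
      x i * (∏ j ∈ nbrs vbl i, (1 - x j)) * 2 ^ Fintype.card V) :
    ∃ f : V → Bool, ∀ i, ¬ A i f := by
  classical
  set n := Fintype.card V with hn
  have hfac : ∀ j : I, (0:ℚ) < 1 - x j := fun j => by linarith [hx1 j]
  have hprodpos : ∀ S : Finset I, (0:ℚ) < ∏ j ∈ S, (1 - x j) :=
    fun S => Finset.prod_pos (fun j _ => hfac j)
  have hprodle1 : ∀ S : Finset I, (∏ j ∈ S, (1 - x j)) ≤ 1 :=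
    fun S => Finset.prod_le_one (fun j _ => le_of_lt (hfac j))
      (fun j _ => by linarith [hx0 j])
  have h2n : (0:ℚ) < 2 ^ n := by positivity
  -- cnt of avoid over empty set
  have havoid_empty : cnt (avoid A (∅ : Finset I)) = 2 ^ n := by
    rw [show avoid A (∅ : Finset I) = fun _ => True by
      funext f; simp [avoid]]
    exact cnt_true_eq
  -- the main conditional-probability estimate
  have main : ∀ m : ℕ, ∀ S : Finset I, S.card ≤ m → ∀ i ∉ S,
      (cnt (fun f => A i f ∧ avoid A S f) : ℚ) ≤ x i * cnt (avoid A S) := by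
    intro m
    induction m with
    | zero =>
      intro S hS i hiS
      have hS0 : S = ∅ := Finset.card_eq_zero.mp (le_antisymm hS (Nat.zero_le _))
      subst hS0
      rw [havoid_empty]
      push_cast
      have h1 : cnt (fun f => A i f ∧ avoid A (∅ : Finset I) f) = cnt (A i) :=
        cnt_congr (fun f => by simp [avoid])
      rw [h1]
      calc (cnt (A i) : ℚ) ≤ x i * (∏ j ∈ nbrs vbl i, (1 - x j)) * 2 ^ n := hcond i
        _ ≤ x i * 1 * 2 ^ n := by
            apply mul_le_mul_of_nonneg_right _ (le_of_lt h2n)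
            exact mul_le_mul_of_nonneg_left (hprodle1 _) (le_of_lt (hx0 i))
        _ = x i * ((2:ℚ) ^ n) := by ring
      -- done
    | succ m ih =>
      intro S hS i hiS
      by_cases hSm : S.card ≤ m
      · exact ih S hSm i hiS
      have hScard : S.card = m + 1 := by omega
      set Γ : Finset I := nbrs vbl i with hΓ
      set S1 : Finset I := S ∩ Γ with hS1
      set S2 : Finset I := S \ Γ with hS2
      have hS1sub : S1 ⊆ Γ := Finset.inter_subset_right
      have hS1S : S1 ⊆ S := Finset.inter_subset_left
      have hS2S : S2 ⊆ S := Finset.sdiff_subset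
      have hunion : S2 ∪ S1 = S := Finset.sdiff_union_inter S Γ
      -- disjointness of variables
      have hdisj : Disjoint (vbl i) (S2.biUnion vbl) := by
        rw [Finset.disjoint_biUnion_right]
        intro j hj
        have hjS : j ∈ S := (Finset.mem_sdiff.mp hj).1
        have hjΓ : j ∉ Γ := (Finset.mem_sdiff.mp hj).2
        have hne : j ≠ i := fun h => hiS (h ▸ hjS)
        rw [hΓ] at hjΓ
        simp only [nbrs, Finset.mem_filter, Finset.mem_univ, true_and, not_and,
          not_not] at hjΓ
        exact hjΓ hne
      -- independence step
      have hindep := cnt_indep (hdet i) (detOn_avoid hdet S2) hdisj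
      -- the chain estimate over subsets of S1
      have chain : ∀ T : Finset I, T ⊆ S1 →
          (∏ j ∈ T, (1 - x j)) * cnt (avoid A S2) ≤ cnt (avoid A (S2 ∪ T)) := by
        intro T
        induction T using Finset.induction_on with
        | empty => intro _; simp
        | insert _ _ hjT ihT =>
          rename_i j T
          intro hsub
          have hjS1 : j ∈ S1 := hsub (Finset.mem_insert_self j T)
          have hTsub : T ⊆ S1 := fun y hy => hsub (Finset.mem_insert_of_mem hy)
          have hjS : j ∈ S := hS1S hjS1
          have hjS2 : j ∉ S2 := by
            rw [hS2]
            simp only [Finset.mem_sdiff, not_and, not_not]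
            intro _; exact hS1sub hjS1
          have hjnotin : j ∉ S2 ∪ T := by
            simp only [Finset.mem_union]
            rintro (h | h)
            · exact hjS2 h
            · exact hjT h
          have hcard : (S2 ∪ T).card ≤ m := by
            have hsub' : S2 ∪ T ⊆ S.erase j := by
              intro k hk
              rcases Finset.mem_union.mp hk with hk2 | hkT
              · exact Finset.mem_erase.mpr ⟨fun h => hjS2 (h ▸ hk2), hS2S hk2⟩
              · exact Finset.mem_erase.mpr ⟨fun h => hjT (h ▸ hkT), hS1S (hTsub hkT)⟩
            calc (S2 ∪ T).card ≤ (S.erase j).card := Finset.card_le_card hsub'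
              _ = S.card - 1 := Finset.card_erase_of_mem hjS
              _ ≤ m := by omega
          have hih := ih (S2 ∪ T) hcard j hjnotin
          -- split
          have hsplit := cnt_split (avoid A (S2 ∪ T)) (A j)
          have hcongr1 : cnt (avoid A (S2 ∪ insert j T))
              = cnt (fun f => avoid A (S2 ∪ T) f ∧ ¬ A j f) := by
            apply cnt_congr
            intro f
            rw [Finset.union_insert]
            simp only [avoid, Finset.forall_mem_insert]
            tauto
          have hcongr2 : cnt (fun f => avoid A (S2 ∪ T) f ∧ A j f)
              = cnt (fun f => A j f ∧ avoid A (S2 ∪ T) f) :=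
            cnt_congr (fun f => and_comm)
          have hchainT := ihT hTsub
          have hprodT : (0:ℚ) ≤ ∏ k ∈ T, (1 - x k) := le_of_lt (hprodpos T)
          have hcntS2 : (0:ℚ) ≤ (cnt (avoid A S2) : ℚ) := Nat.cast_nonneg _
          have hcntS2T : (0:ℚ) ≤ (cnt (avoid A (S2 ∪ T)) : ℚ) := Nat.cast_nonneg _
          rw [Finset.prod_insert hjT]
          have hsplit' : (cnt (avoid A (S2 ∪ insert j T)) : ℚ)
              = (cnt (avoid A (S2 ∪ T)) : ℚ)
                - (cnt (fun f => A j f ∧ avoid A (S2 ∪ T) f) : ℚ) := by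
            rw [hcongr1]
            rw [hsplit, ← hcongr2] at *
            push_cast
            ring
          rw [hsplit']
          have hxj0 := hx0 j
          have hxj1 := hx1 j
          nlinarith [hih, hchainT, hprodpos T, hprodpos (insert j T)]
      -- assemble
      have hstepA : (cnt (fun f => A i f ∧ avoid A S f) : ℚ)
          ≤ (cnt (fun f => A i f ∧ avoid A S2 f) : ℚ) := by
        have := cnt_mono (P := fun f => A i f ∧ avoid A S f)
          (Q := fun f => A i f ∧ avoid A S2 f)
          (fun f hf => ⟨hf.1, fun j hj => hf.2 j (hS2S hj)⟩)
        exact_mod_cast this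
      have hprodsplit : (∏ j ∈ Γ, (1 - x j))
          = (∏ j ∈ Γ \ S1, (1 - x j)) * (∏ j ∈ S1, (1 - x j)) :=
        (Finset.prod_sdiff hS1sub).symm
      have hchainS1 := chain S1 (le_refl S1)
      rw [hunion] at hchainS1
      -- multiply through by 2^n
      have key : (cnt (fun f => A i f ∧ avoid A S f) : ℚ) * 2 ^ n
          ≤ x i * (cnt (avoid A S) : ℚ) * 2 ^ n := by
        have e1 : (cnt (fun f => A i f ∧ avoid A S2 f) : ℚ) * 2 ^ n
            = (cnt (A i) : ℚ) * (cnt (avoid A S2) : ℚ) := by exact_mod_cast hindep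
        have e2 : (cnt (A i) : ℚ) ≤ x i * (∏ j ∈ Γ, (1 - x j)) * 2 ^ n := hcond i
        have hcntS2 : (0:ℚ) ≤ (cnt (avoid A S2) : ℚ) := Nat.cast_nonneg _
        calc (cnt (fun f => A i f ∧ avoid A S f) : ℚ) * 2 ^ n
            ≤ (cnt (fun f => A i f ∧ avoid A S2 f) : ℚ) * 2 ^ n :=
              mul_le_mul_of_nonneg_right hstepA (le_of_lt h2n)
          _ = (cnt (A i) : ℚ) * (cnt (avoid A S2) : ℚ) := e1
          _ ≤ (x i * (∏ j ∈ Γ, (1 - x j)) * 2 ^ n) * (cnt (avoid A S2) : ℚ) :=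
              mul_le_mul_of_nonneg_right e2 hcntS2
          _ = x i * 2 ^ n * ((∏ j ∈ Γ \ S1, (1 - x j))
                * ((∏ j ∈ S1, (1 - x j)) * (cnt (avoid A S2) : ℚ))) := by
              rw [hprodsplit]; ring
          _ ≤ x i * 2 ^ n * (1 * ((∏ j ∈ S1, (1 - x j)) * (cnt (avoid A S2) : ℚ))) := by
              apply mul_le_mul_of_nonneg_left _
                (mul_nonneg (le_of_lt (hx0 i)) (le_of_lt h2n))
              apply mul_le_mul_of_nonneg_right (hprodle1 _)
              exact mul_nonneg (le_of_lt (hprodpos S1)) hcntS2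
          _ ≤ x i * 2 ^ n * (1 * (cnt (avoid A S) : ℚ)) := by
              apply mul_le_mul_of_nonneg_left _
                (mul_nonneg (le_of_lt (hx0 i)) (le_of_lt h2n))
              rw [one_mul, one_mul]
              exact hchainS1
          _ = x i * (cnt (avoid A S) : ℚ) * 2 ^ n := by ring
      exact le_of_mul_le_mul_right key h2n
  -- final chain over all events
  have final : ∀ T : Finset I, (2:ℚ) ^ n * ∏ j ∈ T, (1 - x j) ≤ cnt (avoid A T) := by
    intro T
    induction T using Finset.induction_on with
    | empty => simp [havoid_empty]
    | insert _ _ hjT ihT =>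
      rename_i j T
      have hmain := main T.card T (le_refl _) j hjT
      have hsplit := cnt_split (avoid A T) (A j)
      have hcongr1 : cnt (avoid A (insert j T))
          = cnt (fun f => avoid A T f ∧ ¬ A j f) := by
        apply cnt_congr
        intro f
        simp only [avoid, Finset.forall_mem_insert]
        tauto
      have hcongr2 : cnt (fun f => avoid A T f ∧ A j f)
          = cnt (fun f => A j f ∧ avoid A T f) := cnt_congr (fun f => and_comm)
      have hsplit' : (cnt (avoid A (insert j T)) : ℚ)
          = (cnt (avoid A T) : ℚ) - (cnt (fun f => A j f ∧ avoid A T f) : ℚ) := by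
        rw [hcongr1]
        rw [hsplit, ← hcongr2] at *
        push_cast
        ring
      rw [hsplit', Finset.prod_insert hjT]
      have hxj0 := hx0 j
      have hxj1 := hx1 j
      have h1 : (0:ℚ) ≤ (cnt (avoid A T) : ℚ) := Nat.cast_nonneg _
      nlinarith [hmain, ihT, hprodpos T, hprodpos (insert j T)]
  have hpos : 0 < cnt (avoid A (Finset.univ : Finset I)) := by
    have := final Finset.univ
    have h2 : (0:ℚ) < (2:ℚ) ^ n * ∏ j ∈ (Finset.univ : Finset I), (1 - x j) :=
      mul_pos h2n (hprodpos _)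
    have : (0:ℚ) < (cnt (avoid A (Finset.univ : Finset I)) : ℚ) := lt_of_lt_of_le h2 this
    exact_mod_cast this
  rw [cnt] at hpos
  obtain ⟨f, hf⟩ := Finset.card_pos.mp hpos
  classical
  have hf' := (Finset.mem_filter.mp hf).2
  exact ⟨f, fun i => hf' i (Finset.mem_univ i)⟩

end LLLcnt

namespace LLLcnt

lemma num_L1 : ∀ d : ℕ, 16 ≤ d → (2 + 2*d) * (4 * d^2) ≤ 2^d := by
  intro d hd
  induction d, hd using Nat.le_induction with
  | base => norm_num
  | succ d hd ih =>
    have h1 : (2 + 2*(d+1)) * (4 * (d+1)^2) ≤ 2 * ((2 + 2*d) * (4 * d^2)) := by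
      nlinarith
    calc (2 + 2*(d+1)) * (4 * (d+1)^2) ≤ 2 * ((2 + 2*d) * (4 * d^2)) := h1
      _ ≤ 2 * 2^d := by omega
      _ = 2^(d+1) := by rw [pow_succ]; ring

lemma num_L2 : ∀ d : ℕ, 19 ≤ d → 4 * d^4 ≤ 2^d := by
  intro d hd
  induction d, hd using Nat.le_induction with
  | base => norm_num
  | succ d hd ih =>
    have h1 : 4 * (d+1)^4 ≤ 2 * (4 * d^4) := by
      obtain ⟨e, rfl⟩ : ∃ e, d = 19 + e := ⟨d - 19, by omega⟩
      have key : 4 * ((19 + e)+1)^4 + (402568 + 91488*e + 7728*e^2 + 288*e^3 + 4*e^4)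
          = 2 * (4 * (19 + e)^4) := by ring
      exact Nat.le.intro key
    calc 4 * (d+1)^4 ≤ 2 * (4 * d^4) := h1
      _ ≤ 2 * 2^d := by omega
      _ = 2^(d+1) := by rw [pow_succ]; ring

lemma num_choose (d : ℕ) (hd : 19 ≤ d) : 2 + 2*d + d.choose 2 ≤ d * d := by
  obtain ⟨e, rfl⟩ : ∃ e, d = 19 + e := ⟨d - 19, by omega⟩
  have h2 : (19 + e).choose 2 = (19 + e) * (18 + e) / 2 := by
    rw [Nat.choose_two_right, show 19 + e - 1 = 18 + e from by omega]
  have h3 : (19 + e) * (18 + e) / 2 * 2 = (19 + e) * (18 + e) := by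
    apply Nat.div_mul_cancel
    rcases Nat.even_or_odd e with he | he
    · obtain ⟨k, rfl⟩ := he
      exact ⟨(19 + k + k) * (9 + k), by ring⟩
    · obtain ⟨k, hk⟩ := he
      exact ⟨(10 + k) * (19 + 2*k), by rw [hk]; ring⟩
  set c := (19 + e) * (18 + e) / 2 with hc
  rw [h2]
  nlinarith [h3]

/-- The key numerical inequality feeding the local lemma. -/
lemma numeric_main (d : ℕ) (hd : 14 ≤ d) (h15 : d ≠ 15) (h17 : d ≠ 17) :
    ∃ x0 : ℚ, 0 < x0 ∧ x0 < 1 ∧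
      ((if d % 2 = 0 then 2 + 2*d else 2 + 2*d + d.choose 2 : ℕ) : ℚ)
        ≤ x0 * (1 - x0)^(d*d) * 2^d := by
  by_cases h14 : d = 14
  · subst h14
    refine ⟨1/197, by norm_num, by norm_num, ?_⟩
    norm_num
  · -- d ≥ 16
    have hd16 : 16 ≤ d := by omega
    have hdQ : (0:ℚ) < d := by exact_mod_cast Nat.lt_of_lt_of_le (by norm_num) hd
    have hdQ14 : (14:ℚ) ≤ (d:ℚ) := by exact_mod_cast hd
    refine ⟨1/(2*(d:ℚ)^2), by positivity, ?_, ?_⟩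
    · rw [div_lt_one (by positivity)]
      nlinarith [hdQ14]
    · -- Bernoulli: (1 - x0)^(d*d) ≥ 1/2
      have hbern : (1:ℚ)/2 ≤ (1 - 1/(2*(d:ℚ)^2))^(d*d) := by
        have hsmall : 1/(2*(d:ℚ)^2) ≤ 1 := by
          rw [div_le_one (by positivity)]
          nlinarith [hdQ14]
        have h := one_add_mul_le_pow (a := -(1/(2*(d:ℚ)^2))) (by linarith) (d*d)
        have he : 1 + ((d*d : ℕ) : ℚ) * (-(1/(2*(d:ℚ)^2))) = 1/2 := by
          push_cast
          field_simp
          ring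
        rw [he] at h
        convert h using 2
        · rfl
        ring
      -- reduce to the ℕ inequality  B * (4 d²) ≤ 2^d
      have hkey : ((if d % 2 = 0 then 2 + 2*d else 2 + 2*d + d.choose 2 : ℕ) : ℚ)
          * (4 * (d:ℚ)^2) ≤ 2^d := by
        rcases Nat.even_or_odd d with he | ho
        · have hmod : d % 2 = 0 := Nat.even_iff.mp he
          rw [if_pos hmod]
          have := num_L1 d hd16
          calc ((2 + 2*d : ℕ) : ℚ) * (4 * (d:ℚ)^2)
              = (((2 + 2*d) * (4 * d^2) : ℕ) : ℚ) := by push_cast; ring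
            _ ≤ ((2^d : ℕ) : ℚ) := by exact_mod_cast this
            _ = 2^d := by push_cast; ring
        · have hmod : ¬ d % 2 = 0 := by
            rw [Nat.odd_iff] at ho; omega
          rw [if_neg hmod]
          have hd19 : 19 ≤ d := by
            rw [Nat.odd_iff] at ho; omega
          have h1 := num_choose d hd19
          have h2 := num_L2 d hd19
          calc ((2 + 2*d + d.choose 2 : ℕ) : ℚ) * (4 * (d:ℚ)^2)
              = (((2 + 2*d + d.choose 2) * (4 * d^2) : ℕ) : ℚ) := by push_cast; ring
            _ ≤ ((4 * d^4 : ℕ) : ℚ) := by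
                have : (2 + 2*d + d.choose 2) * (4 * d^2) ≤ (d*d) * (4 * d^2) :=
                  Nat.mul_le_mul_right _ h1
                exact_mod_cast le_trans this (by nlinarith)
            _ ≤ ((2^d : ℕ) : ℚ) := by exact_mod_cast h2
            _ = 2^d := by push_cast; ring
      -- combine
      set B : ℕ := (if d % 2 = 0 then 2 + 2*d else 2 + 2*d + d.choose 2 : ℕ) with hB
      have hBpos : (0:ℚ) ≤ (B:ℚ) := Nat.cast_nonneg _
      have hx0 : (0:ℚ) < 1/(2*(d:ℚ)^2) := by positivity
      calc (B:ℚ) = ((B:ℚ) * (4 * (d:ℚ)^2)) * (1/(2*(d:ℚ)^2)) * (1/2) := by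
            field_simp
            ring
          _ ≤ 2^d * (1/(2*(d:ℚ)^2)) * (1/2) := by
            apply mul_le_mul_of_nonneg_right _ (by norm_num)
            exact mul_le_mul_of_nonneg_right hkey (le_of_lt hx0)
          _ ≤ 2^d * (1/(2*(d:ℚ)^2)) * ((1 - 1/(2*(d:ℚ)^2))^(d*d)) := by
            apply mul_le_mul_of_nonneg_left hbern
            positivity
          _ = 1/(2*(d:ℚ)^2) * (1 - 1/(2*(d:ℚ)^2))^(d*d) * 2^d := by ring

end LLLcnt

lemma LLLcnt.nat_lt2 {x : ℕ} (h : x < 2) : x = 0 ∨ x = 1 := by omega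

lemma LLLcnt.nat_lt3 {x : ℕ} (h : x < 3) : x = 0 ∨ x = 1 ∨ x = 2 := by omega




open Classical in
/-- Degree of `v` in `G` (classical, so usable for arbitrary subgraphs). -/
noncomputable def deg {V : Type*} [Fintype V] (G : SimpleGraph V) (v : V) : ℕ :=
  G.degree v

open Classical in
/-- Weighted degree (sum) of `v` under edge weighting `w`. -/
noncomputable def wdeg {V : Type*} [Fintype V] (G : SimpleGraph V) (w : Sym2 V → ℕ) (v : V) : ℕ :=
  ∑ e ∈ G.incidenceFinset v, w e

/-- `G` has no `K₂`-component: every edge is adjacent to some other edge. -/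
def NoIsolatedEdge {V : Type*} (G : SimpleGraph V) : Prop :=
  ∀ u v, G.Adj u v → ∃ x, (G.Adj u x ∧ x ≠ v) ∨ (G.Adj v x ∧ x ≠ u)

/-- `G` admits a neighbour-sum-distinguishing edge weighting with weights in {1,2,3}. -/
def Fulfills123 {V : Type*} [Fintype V] (G : SimpleGraph V) : Prop :=
  ∃ w : Sym2 V → ℕ, (∀ e ∈ G.edgeSet, w e = 1 ∨ w e = 2 ∨ w e = 3) ∧
    ∀ u v, G.Adj u v → wdeg G w u ≠ wdeg G w v

open LLLcnt

/-- Random vertex partition lemma: every `d`-regular graph, `d ≥ 14`,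
`d ∉ {15,17}`, has a vertex partition `V₀ ∪ V₁` with, for `r = d mod 2`:
each vertex of `V₀` has ≥ 2+r neighbours in `V₀` and ≥ 2 in `V₁`, and
symmetrically for `V₁`. -/
theorem stmt_10 {V : Type*} [Fintype V] (G : SimpleGraph V) (d : ℕ)
    (hd : 14 ≤ d) (h15 : d ≠ 15) (h17 : d ≠ 17)
    (hreg : ∀ v : V, deg G v = d) :
    ∃ V₀ : Set V,
      (∀ v ∈ V₀, 2 + d % 2 ≤ (G.neighborSet v ∩ V₀).ncard ∧
        2 ≤ (G.neighborSet v ∩ V₀ᶜ).ncard) ∧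
      (∀ v ∈ V₀ᶜ, 2 + d % 2 ≤ (G.neighborSet v ∩ V₀ᶜ).ncard ∧
        2 ≤ (G.neighborSet v ∩ V₀).ncard) := by
  classical
  set n := Fintype.card V with hn
  set a := 2 + d % 2 with ha
  set B := (if d % 2 = 0 then 2 + 2*d else 2 + 2*d + d.choose 2 : ℕ) with hB
  set N : V → Finset V := fun v => G.neighborFinset v with hN
  have hdeg_ncard : ∀ v, (G.neighborSet v).ncard = d := by
    intro v
    have h := hreg v
    rw [← h]
    unfold deg SimpleGraph.degree
    rw [SimpleGraph.neighborFinset_def, Set.ncard_eq_toFinset_card']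
  have hNcard : ∀ v, (N v).card = d := by
    intro v
    rw [hN]
    simp only
    rw [SimpleGraph.neighborFinset_def, ← Set.ncard_eq_toFinset_card', hdeg_ncard v]
  have hvN : ∀ v, v ∉ N v := by
    intro v
    rw [hN]
    exact SimpleGraph.notMem_neighborFinset_self G v
  have hNadj : ∀ v u, u ∈ N v ↔ G.Adj v u := by
    intro v u
    rw [hN]
    exact SimpleGraph.mem_neighborFinset G v u
  set A : V → (V → Bool) → Prop := fun v f =>
    ((N v).filter (fun u => f u = f v)).card < a ∨
    ((N v).filter (fun u => f u ≠ f v)).card < 2 with hA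
  set vbl : V → Finset V := fun v => insert v (N v) with hvbl
  clear_value n a B N A vbl
  -- each vertex yields n ≥ d + 1
  have hdn : ∀ (_ : V), d + 1 ≤ n := by
    intro v
    calc d + 1 = (vbl v).card := by
          rw [hvbl]; simp only
          rw [Finset.card_insert_of_notMem (hvN v), hNcard v]
      _ ≤ n := by rw [hn]; exact Finset.card_le_univ _
  -- determinedness
  have hdet : ∀ v, DetOn (vbl v) (A v) := by
    intro v f g hag hAf
    have hagree : ∀ x, x ∈ insert v (N v) → f x = g x := by
      intro x hx
      apply hag
      rw [hvbl]
      exact hx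
    have hfv : f v = g v := hagree v (Finset.mem_insert_self _ _)
    have h1 : (N v).filter (fun u => g u = g v) = (N v).filter (fun u => f u = f v) := by
      apply Finset.filter_congr
      intro u hu
      rw [← hagree u (Finset.mem_insert_of_mem hu), ← hfv]
    have h2 : (N v).filter (fun u => g u ≠ g v) = (N v).filter (fun u => f u ≠ f v) := by
      apply Finset.filter_congr
      intro u hu
      rw [← hagree u (Finset.mem_insert_of_mem hu), ← hfv]
    simp only [hA] at hAf ⊢
    rw [h1, h2]
    exact hAf
  -- dependency degree bound
  have hΓ : ∀ v, (nbrs vbl v).card ≤ d * d := by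
    intro v
    have hsub : nbrs vbl v ⊆ (N v).biUnion (fun w => (insert w (N w)).erase v) := by
      intro u hu
      simp only [nbrs, Finset.mem_filter, Finset.mem_univ, true_and] at hu
      obtain ⟨hne, hnd⟩ := hu
      rw [Finset.not_disjoint_iff] at hnd
      obtain ⟨z, hz1, hz2⟩ := hnd
      rw [hvbl] at hz1 hz2
      simp only at hz1 hz2
      rw [Finset.mem_biUnion]
      rcases Finset.mem_insert.mp hz1 with rfl | hzN
      · rcases Finset.mem_insert.mp hz2 with h | h
        · exact absurd h.symm hne
        · have huNv : u ∈ N z := by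
            rw [hNadj] at h ⊢
            exact G.adj_symm h
          exact ⟨u, huNv, Finset.mem_erase.mpr ⟨hne, Finset.mem_insert_self _ _⟩⟩
      · rcases Finset.mem_insert.mp hz2 with rfl | hzNu
        · exact ⟨z, hzN, Finset.mem_erase.mpr ⟨hne, Finset.mem_insert_self _ _⟩⟩
        · have huNz : u ∈ N z := by
            rw [hNadj] at hzNu ⊢
            exact G.adj_symm hzNu
          exact ⟨z, hzN, Finset.mem_erase.mpr ⟨hne, Finset.mem_insert_of_mem huNz⟩⟩
    calc (nbrs vbl v).card ≤ ((N v).biUnion (fun w => (insert w (N w)).erase v)).card :=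
          Finset.card_le_card hsub
      _ ≤ ∑ w ∈ N v, ((insert w (N w)).erase v).card := Finset.card_biUnion_le
      _ ≤ ∑ w ∈ N v, d := by
          apply Finset.sum_le_sum
          intro w hw
          have hvw : v ∈ insert w (N w) := by
            apply Finset.mem_insert_of_mem
            rw [hNadj] at hw ⊢
            exact G.adj_symm hw
          rw [Finset.card_erase_of_mem hvw, Finset.card_insert_of_notMem (hvN w),
            hNcard w]
          omega
      _ = d * d := by rw [Finset.sum_const, hNcard v, smul_eq_mul]
  -- counting bound for each bad event
  have hcnt : ∀ v, cnt (A v) ≤ B * 2 ^ (n - d) := by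
    intro v
    have hd1n := hdn v
    set Qt : (V → Bool) → Prop := fun f =>
      ((N v).filter (fun u => f u = true)).card < a ∨
      ((N v).filter (fun u => f u = false)).card < 2 with hQt
    set Qf : (V → Bool) → Prop := fun f =>
      ((N v).filter (fun u => f u = false)).card < a ∨
      ((N v).filter (fun u => f u = true)).card < 2 with hQf
    clear_value Qt Qf
    have hdisj : Disjoint (N v) ({v} : Finset V) := by
      rw [Finset.disjoint_singleton_right]
      exact hvN v
    have hdetQt : DetOn (N v) Qt := by
      intro f g hag hQ
      have e1 : (N v).filter (fun u => g u = true) = (N v).filter (fun u => f u = true) :=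
        Finset.filter_congr (fun u hu => by rw [← hag u hu])
      have e2 : (N v).filter (fun u => g u = false) = (N v).filter (fun u => f u = false) :=
        Finset.filter_congr (fun u hu => by rw [← hag u hu])
      simp only [hQt] at hQ ⊢
      rw [e1, e2]
      exact hQ
    have hdetQf : DetOn (N v) Qf := by
      intro f g hag hQ
      have e1 : (N v).filter (fun u => g u = true) = (N v).filter (fun u => f u = true) :=
        Finset.filter_congr (fun u hu => by rw [← hag u hu])
      have e2 : (N v).filter (fun u => g u = false) = (N v).filter (fun u => f u = false) :=
        Finset.filter_congr (fun u hu => by rw [← hag u hu])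
      simp only [hQf] at hQ ⊢
      rw [e1, e2]
      exact hQ
    have hdetvT : DetOn ({v} : Finset V) (fun f => f v = true) := by
      intro f g hag h
      rw [← hag v (Finset.mem_singleton_self v)]
      exact h
    have hdetvF : DetOn ({v} : Finset V) (fun f => f v = false) := by
      intro f g hag h
      rw [← hag v (Finset.mem_singleton_self v)]
      exact h
    have hQfQt : cnt Qf = cnt Qt := by
      rw [← cnt_comp_not Qt]
      apply cnt_congr
      intro f
      simp [hQt, hQf]
    -- count of exact values
    have hcount : ∀ k, cnt (fun f => ((N v).filter (fun u => f u = true)).card = k)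
        = d.choose k * 2 ^ (n - d) := by
      intro k
      rw [hn, cnt_count_true (N v) k, hNcard v]
    have hQ2 : cnt (fun f => ((N v).filter (fun u => f u = false)).card < 2)
        ≤ (1 + d) * 2 ^ (n - d) := by
      have himp : ∀ f : V → Bool, (((N v).filter (fun u => f u = false)).card < 2) →
          ((((N v).filter (fun u => f u = true)).card = d) ∨
           (((N v).filter (fun u => f u = true)).card = d - 1)) := by
        intro f hf
        have hsum : ((N v).filter (fun u => f u = true)).card
            + ((N v).filter (fun u => f u = false)).card = d := by
          rw [show ((N v).filter (fun u => f u = false))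
              = ((N v).filter (fun u => ¬ (f u = true))) from
            Finset.filter_congr (fun u _ => by cases f u <;> simp)]
          rw [Finset.card_filter_add_card_filter_not, hNcard v]
        omega
      calc cnt (fun f => ((N v).filter (fun u => f u = false)).card < 2)
          ≤ cnt (fun f => (((N v).filter (fun u => f u = true)).card = d) ∨
              (((N v).filter (fun u => f u = true)).card = d - 1)) := cnt_mono himp
        _ ≤ cnt (fun f => ((N v).filter (fun u => f u = true)).card = d)
            + cnt (fun f => ((N v).filter (fun u => f u = true)).card = d - 1) :=
            cnt_or_le _ _
        _ = d.choose d * 2 ^ (n - d) + d.choose (d - 1) * 2 ^ (n - d) := by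
            rw [hcount, hcount]
        _ = (1 + d) * 2 ^ (n - d) := by
            rw [Nat.choose_self,
              show d.choose (d-1) = d by
                rw [Nat.choose_symm (by omega : 1 ≤ d), Nat.choose_one_right]]
            ring
    have hQ1 : cnt (fun f => ((N v).filter (fun u => f u = true)).card < a)
        ≤ (if d % 2 = 0 then 1 + d else 1 + d + d.choose 2) * 2 ^ (n - d) := by
      by_cases hmod : d % 2 = 0
      · rw [if_pos hmod]
        have hav : a = 2 := by rw [ha, hmod]
        have himp : ∀ f : V → Bool, (((N v).filter (fun u => f u = true)).card < a) →
            ((((N v).filter (fun u => f u = true)).card = 0) ∨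
             (((N v).filter (fun u => f u = true)).card = 1)) := by
          intro f hf; rw [hav] at hf; exact nat_lt2 hf
        calc cnt (fun f => ((N v).filter (fun u => f u = true)).card < a)
            ≤ cnt (fun f => (((N v).filter (fun u => f u = true)).card = 0) ∨
                (((N v).filter (fun u => f u = true)).card = 1)) := cnt_mono himp
          _ ≤ cnt (fun f => ((N v).filter (fun u => f u = true)).card = 0)
              + cnt (fun f => ((N v).filter (fun u => f u = true)).card = 1) :=
              cnt_or_le _ _
          _ = d.choose 0 * 2 ^ (n - d) + d.choose 1 * 2 ^ (n - d) := by rw [hcount, hcount]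
          _ = (1 + d) * 2 ^ (n - d) := by
              rw [Nat.choose_zero_right, Nat.choose_one_right]; ring
      · rw [if_neg hmod]
        have hav : a = 3 := by
          rcases Nat.mod_two_eq_zero_or_one d with h | h
          · exact absurd h hmod
          · rw [ha, h]
        have himp : ∀ f : V → Bool, (((N v).filter (fun u => f u = true)).card < a) →
            ((((N v).filter (fun u => f u = true)).card = 0) ∨
             ((((N v).filter (fun u => f u = true)).card = 1) ∨
              (((N v).filter (fun u => f u = true)).card = 2))) := by
          intro f hf; rw [hav] at hf; exact nat_lt3 hf
        calc cnt (fun f => ((N v).filter (fun u => f u = true)).card < a)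
            ≤ cnt (fun f => (((N v).filter (fun u => f u = true)).card = 0) ∨
                ((((N v).filter (fun u => f u = true)).card = 1) ∨
                 (((N v).filter (fun u => f u = true)).card = 2))) := cnt_mono himp
          _ ≤ cnt (fun f => ((N v).filter (fun u => f u = true)).card = 0)
              + cnt (fun f => (((N v).filter (fun u => f u = true)).card = 1) ∨
                  (((N v).filter (fun u => f u = true)).card = 2)) := cnt_or_le _ _
          _ ≤ cnt (fun f => ((N v).filter (fun u => f u = true)).card = 0)
              + (cnt (fun f => ((N v).filter (fun u => f u = true)).card = 1)
                + cnt (fun f => ((N v).filter (fun u => f u = true)).card = 2)) := by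
              exact Nat.add_le_add_left (cnt_or_le _ _) _
          _ = d.choose 0 * 2 ^ (n - d) + (d.choose 1 * 2 ^ (n - d)
              + d.choose 2 * 2 ^ (n - d)) := by rw [hcount, hcount, hcount]
          _ = (1 + d + d.choose 2) * 2 ^ (n - d) := by
              rw [Nat.choose_zero_right, Nat.choose_one_right]; ring
    have hQtB : cnt Qt ≤ B * 2 ^ (n - d) := by
      have hsplitQ : cnt Qt ≤ cnt (fun f => ((N v).filter (fun u => f u = true)).card < a)
          + cnt (fun f => ((N v).filter (fun u => f u = false)).card < 2) := by
        rw [hQt]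
        exact cnt_or_le _ _
      rw [hB]
      by_cases hmod : d % 2 = 0
      · rw [if_pos hmod]
        rw [if_pos hmod] at hQ1
        calc cnt Qt ≤ _ + _ := hsplitQ
          _ ≤ (1 + d) * 2 ^ (n - d) + (1 + d) * 2 ^ (n - d) := Nat.add_le_add hQ1 hQ2
          _ = (2 + 2 * d) * 2 ^ (n - d) := by ring
      · rw [if_neg hmod]
        rw [if_neg hmod] at hQ1
        calc cnt Qt ≤ _ + _ := hsplitQ
          _ ≤ (1 + d + d.choose 2) * 2 ^ (n - d) + (1 + d) * 2 ^ (n - d) :=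
              Nat.add_le_add hQ1 hQ2
          _ = (2 + 2 * d + d.choose 2) * 2 ^ (n - d) := by ring
    -- combine: cnt (A v) ≤ cnt Qt
    have hsplit : ∀ f, A v f ↔ ((Qt f ∧ f v = true) ∨ (Qf f ∧ f v = false)) := by
      intro f
      cases hfv : f v with
      | true => simp [hA, hQt, hQf, hfv]
      | false => simp [hA, hQt, hQf, hfv]
    have h1 : cnt (A v) ≤ cnt (fun f => Qt f ∧ f v = true)
        + cnt (fun f => Qf f ∧ f v = false) := by
      rw [cnt_congr hsplit]
      exact cnt_or_le _ _
    have he1 : cnt (fun f => Qt f ∧ f v = true) * 2 ^ n = cnt Qt * 2 ^ (n - 1) := by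
      rw [hn, cnt_indep hdetQt hdetvT hdisj, cnt_fv_true]
    have he2 : cnt (fun f => Qf f ∧ f v = false) * 2 ^ n = cnt Qf * 2 ^ (n - 1) := by
      rw [hn, cnt_indep hdetQf hdetvF hdisj, cnt_fv_false]
    have h2n' : 2 ^ n = 2 ^ (n - 1) * 2 := by
      rw [← pow_succ]
      congr 1
      exact (Nat.succ_pred_eq_of_pos (Nat.lt_of_lt_of_le (Nat.succ_pos d) hd1n)).symm
    have hAQt : cnt (A v) ≤ cnt Qt := by
      have hmul : cnt (A v) * 2 ^ n ≤ (cnt Qt * 2 ^ (n - 1)) * 2 := by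
        calc cnt (A v) * 2 ^ n
            ≤ (cnt (fun f => Qt f ∧ f v = true) + cnt (fun f => Qf f ∧ f v = false)) * 2 ^ n :=
              Nat.mul_le_mul_right _ h1
          _ = cnt Qt * 2 ^ (n - 1) + cnt Qf * 2 ^ (n - 1) := by
              rw [Nat.add_mul, he1, he2]
          _ = (cnt Qt * 2 ^ (n - 1)) * 2 := by rw [hQfQt]; ring
      rw [h2n'] at hmul
      have hpos : 0 < 2 ^ (n - 1) * 2 := by positivity
      calc cnt (A v) = cnt (A v) * (2 ^ (n-1) * 2) / (2 ^ (n-1) * 2) := by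
            rw [Nat.mul_div_cancel _ hpos]
        _ ≤ (cnt Qt * 2 ^ (n - 1)) * 2 / (2 ^ (n-1) * 2) := Nat.div_le_div_right hmul
        _ = cnt Qt := by
            rw [show (cnt Qt * 2 ^ (n - 1)) * 2 = cnt Qt * (2 ^ (n-1) * 2) by ring,
              Nat.mul_div_cancel _ hpos]
    exact le_trans hAQt hQtB
  -- numerical input
  obtain ⟨x0, hx00, hx01, hnum⟩ := LLLcnt.numeric_main d hd h15 h17
  -- the local lemma condition
  have hcond : ∀ v, (cnt (A v) : ℚ) ≤
      x0 * (∏ j ∈ nbrs vbl v, (1 - x0)) * 2 ^ n := by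
    intro v
    have hd1n := hdn v
    rw [Finset.prod_const]
    have hpow : (1 - x0) ^ (d * d) ≤ (1 - x0) ^ ((nbrs vbl v).card) :=
      pow_le_pow_of_le_one (by linarith) (by linarith) (hΓ v)
    have hc := hcnt v
    calc (cnt (A v) : ℚ) ≤ (B : ℚ) * 2 ^ (n - d) := by exact_mod_cast hc
      _ ≤ (x0 * (1 - x0) ^ (d * d) * 2 ^ d) * 2 ^ (n - d) := by
          apply mul_le_mul_of_nonneg_right _ (by positivity)
          rw [hB]
          exact_mod_cast hnum
      _ = x0 * (1 - x0) ^ (d * d) * 2 ^ n := by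
          rw [mul_assoc, ← pow_add]
          congr 2
          omega
      _ ≤ x0 * (1 - x0) ^ ((nbrs vbl v).card) * 2 ^ n := by
          apply mul_le_mul_of_nonneg_right _ (by positivity)
          exact mul_le_mul_of_nonneg_left hpow (le_of_lt hx00)
  -- apply the local lemma
  rw [hn] at hcond
  obtain ⟨f, hf⟩ := LLLcnt.lll A vbl hdet (fun _ => x0) (fun _ => hx00) (fun _ => hx01) hcond
  refine ⟨{v | f v = true}, ?_, ?_⟩
  · intro v hv
    have hfv : f v = true := hv
    have hAv := hf v
    simp only [hA, not_or, not_lt] at hAv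
    obtain ⟨hsame, hcross⟩ := hAv
    constructor
    · have hset : G.neighborSet v ∩ {u | f u = true}
          = ↑((N v).filter (fun u => f u = true)) := by
        ext u
        simp [hNadj, SimpleGraph.mem_neighborSet, Set.mem_inter_iff]
      rw [hset, Set.ncard_coe_finset]
      have : (N v).filter (fun u => f u = f v) = (N v).filter (fun u => f u = true) := by
        simp only [hfv]
      rw [← this]
      exact hsame
    · have hset : G.neighborSet v ∩ {u | f u = true}ᶜ
          = ↑((N v).filter (fun u => f u = false)) := by
        ext u
        simp [hNadj, SimpleGraph.mem_neighborSet, Set.mem_inter_iff, Bool.not_eq_true]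
      rw [hset, Set.ncard_coe_finset]
      have : (N v).filter (fun u => f u ≠ f v) = (N v).filter (fun u => f u = false) := by
        apply Finset.filter_congr
        intro u hu
        rw [hfv]
        cases f u <;> simp
      rw [← this]
      exact hcross
  · intro v hv
    have hfv : f v = false := by
      simp only [Set.mem_compl_iff, Set.mem_setOf_eq, Bool.not_eq_true] at hv
      exact hv
    have hAv := hf v
    simp only [hA, not_or, not_lt] at hAv
    obtain ⟨hsame, hcross⟩ := hAv
    constructor
    · have hset : G.neighborSet v ∩ {u | f u = true}ᶜ
          = ↑((N v).filter (fun u => f u = false)) := by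
        ext u
        simp [hNadj, SimpleGraph.mem_neighborSet, Set.mem_inter_iff, Bool.not_eq_true]
      rw [hset, Set.ncard_coe_finset]
      have : (N v).filter (fun u => f u = f v) = (N v).filter (fun u => f u = false) := by
        simp only [hfv]
      rw [← this]
      exact hsame
    · have hset : G.neighborSet v ∩ {u | f u = true}
          = ↑((N v).filter (fun u => f u = true)) := by
        ext u
        simp [hNadj, SimpleGraph.mem_neighborSet, Set.mem_inter_iff]
      rw [hset, Set.ncard_coe_finset]
      have : (N v).filter (fun u => f u ≠ f v) = (N v).filter (fun u => f u = true) := by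
        apply Finset.filter_congr
        intro u hu
        rw [hfv]
        cases f u <;> simp
      rw [← this]
      exact hcross
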